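/- Let p : ℝ → ℝ be a continuously differentiable, strictly positive probability density such that ∫_ℝ x² p(x) dx = 1, x·p(x) → 0 as x → ±∞, and J := ∫_ℝ (p'(x))²/p(x) dx < ∞. Then J ≥ 1, with equality if and only if p(x) = e^{−x²/2}/√(2π) for almost every x ∈ ℝ. -/

import Mathlib

open MeasureTheory Filter Real

lemma gauss_int_half : ∫ x : ℝ, Real.exp (-x^2/2) = Real.sqrt (2*π) := by
  have h := integral_gaussian (1/2 : ℝ)
  have e : ∫ x : ℝ, Real.exp (-x^2/2) = ∫ x : ℝ, Real.exp (-(1/2) * x^2) := by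
    congr 1; ext x; ring_nf
  rw [e, h, show π / (1/2 : ℝ) = 2 * π by ring]

lemma exp_sq_hasDeriv (x : ℝ) :
    HasDerivAt (fun y : ℝ => Real.exp (y^2/2)) (x * Real.exp (x^2/2)) x := by
  have h0 : HasDerivAt (fun y : ℝ => y^2/2) x x := by
    have := (hasDerivAt_pow 2 x).div_const 2
    exact this.congr_deriv (by norm_num)
  have := (Real.hasDerivAt_exp (x^2/2)).comp x h0
  exact this.congr_deriv (by ring)

lemma exp_neg_sq_hasDeriv (x : ℝ) :
    HasDerivAt (fun y : ℝ => Real.exp (-y^2/2)) (-x * Real.exp (-x^2/2)) x := by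
  have h0 : HasDerivAt (fun y : ℝ => -y^2/2) (-x) x := by
    have := ((hasDerivAt_pow 2 x).neg).div_const 2
    exact this.congr_deriv (by norm_num; ring)
  have := (Real.hasDerivAt_exp (-x^2/2)).comp x h0
  exact this.congr_deriv (by ring)

/-- Among unit-variance densities, the standard Gaussian minimizes Fisher information:
`J = ∫ (p')²/p ≥ 1`, with equality iff `p` is the standard Gaussian density a.e. -/
theorem fisher_information_ge_one
    (p : ℝ → ℝ) (hp : ContDiff ℝ 1 p) (hpos : ∀ x, 0 < p x)
    (hp1 : ∫ x, p x = 1) (hvar : ∫ x, x ^ 2 * p x = 1)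
    (htail_top : Tendsto (fun x => x * p x) atTop (nhds 0))
    (htail_bot : Tendsto (fun x => x * p x) atBot (nhds 0))
    (hJ : Integrable (fun x => (deriv p x) ^ 2 / p x)) :
    1 ≤ ∫ x, (deriv p x) ^ 2 / p x ∧
      ((∫ x, (deriv p x) ^ 2 / p x) = 1 ↔
        ∀ᵐ x : ℝ, p x = Real.exp (-x ^ 2 / 2) / Real.sqrt (2 * π)) := by
  have hpc : Continuous p := hp.continuous
  have hdc : Continuous (deriv p) := hp.continuous_deriv le_rfl
  have hdiff : Differentiable ℝ p := hp.differentiable one_ne_zero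
  have hip : Integrable p := by
    by_contra h; rw [integral_undef h] at hp1; norm_num at hp1
  have hix2p : Integrable (fun x => x ^ 2 * p x) := by
    by_contra h; rw [integral_undef h] at hvar; norm_num at hvar
  have hs0 : ∀ x, Real.sqrt (p x) ≠ 0 := fun x => (Real.sqrt_pos.mpr (hpos x)).ne'
  have hs2 : ∀ x, Real.sqrt (p x) ^ 2 = p x := fun x => Real.sq_sqrt (hpos x).le
  -- pointwise bound for x * p'
  have hbd : ∀ x, |x * deriv p x| ≤ (x ^ 2 * p x + (deriv p x) ^ 2 / p x) / 2 := by
    intro x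
    have h2 := hs2 x
    have h0 := hs0 x
    have key : x * deriv p x
        = (x * Real.sqrt (p x)) * (deriv p x / Real.sqrt (p x)) := by
      field_simp
    have e1 : (x * Real.sqrt (p x)) ^ 2 = x ^ 2 * p x := by rw [mul_pow, h2]
    have e2 : (deriv p x / Real.sqrt (p x)) ^ 2 = (deriv p x) ^ 2 / p x := by
      rw [div_pow, h2]
    rw [key, ← e1, ← e2]
    set a := x * Real.sqrt (p x); set b := deriv p x / Real.sqrt (p x)
    rw [abs_le]
    constructor <;> nlinarith [sq_nonneg (a + b), sq_nonneg (a - b)]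
  have hxp' : Integrable (fun x => x * deriv p x) := by
    refine ((hix2p.add hJ).div_const 2).mono
      ((continuous_id.mul hdc).aestronglyMeasurable) (ae_of_all _ fun x => ?_)
    rw [Real.norm_eq_abs, Real.norm_eq_abs]
    refine (hbd x).trans (le_abs_self _)
  -- integration by parts: ∫ x p' = -1
  have hderivxp : ∀ x : ℝ, HasDerivAt (fun y => y * p y) (p x + x * deriv p x) x := by
    intro x
    have := (hasDerivAt_id x).mul (hdiff x).hasDerivAt
    exact this.congr_deriv (by simp)
  have hint : Integrable (fun x => p x + x * deriv p x) := hip.add hxp'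
  have hIoi : ∫ x in Set.Ioi (0:ℝ), (p x + x * deriv p x) = 0 - 0 * p 0 :=
    integral_Ioi_of_hasDerivAt_of_tendsto' (fun x _ => hderivxp x)
      hint.integrableOn htail_top
  have hIic : ∫ x in Set.Iic (0:ℝ), (p x + x * deriv p x) = 0 * p 0 - 0 :=
    integral_Iic_of_hasDerivAt_of_tendsto' (fun x _ => hderivxp x)
      hint.integrableOn htail_bot
  have htot : ∫ x, (p x + x * deriv p x) = 0 := by
    rw [← intervalIntegral.integral_Iic_add_Ioi (b := (0:ℝ)) hint.integrableOn hint.integrableOn,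
      hIoi, hIic]; ring
  rw [integral_add hip hxp', hp1] at htot
  have hxpI : ∫ x, x * deriv p x = -1 := by linarith
  -- the score function shifted by x
  set g : ℝ → ℝ := fun x => deriv p x / Real.sqrt (p x) + x * Real.sqrt (p x)
    with hgdef
  have hgsq : ∀ x, g x ^ 2
      = (deriv p x) ^ 2 / p x + 2 * (x * deriv p x) + x ^ 2 * p x := by
    intro x
    have h2 := hs2 x
    have h0 := hs0 x
    have e1 : (deriv p x / Real.sqrt (p x)) ^ 2 = (deriv p x) ^ 2 / p x := by
      rw [div_pow, h2]
    have e2 : (x * Real.sqrt (p x)) ^ 2 = x ^ 2 * p x := by rw [mul_pow, h2]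
    have e3 : deriv p x / Real.sqrt (p x) * (x * Real.sqrt (p x))
        = x * deriv p x := by field_simp
    simp only [hgdef]
    rw [add_sq, mul_assoc 2, e3, e1, e2]
  have hgsqint : Integrable (fun x => g x ^ 2) := by
    have e : (fun x => g x ^ 2)
        = fun x => (deriv p x) ^ 2 / p x + 2 * (x * deriv p x) + x ^ 2 * p x :=
      funext hgsq
    rw [e]
    exact (hJ.add (hxp'.const_mul 2)).add hix2p
  have hgint : ∫ x, g x ^ 2 = (∫ x, (deriv p x) ^ 2 / p x) - 1 := by
    have e : ∫ x, g x ^ 2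
        = ∫ x, ((deriv p x) ^ 2 / p x + 2 * (x * deriv p x) + x ^ 2 * p x) := by
      congr 1; exact funext hgsq
    have hAB : Integrable (fun x => (deriv p x) ^ 2 / p x + 2 * (x * deriv p x)) :=
      hJ.add (hxp'.const_mul 2)
    have hB : Integrable (fun x => 2 * (x * deriv p x)) := hxp'.const_mul 2
    rw [e, integral_add hAB hix2p, integral_add hJ hB, integral_const_mul, hxpI, hvar]
    ring
  have h0g : 0 ≤ ∫ x, g x ^ 2 := integral_nonneg fun x => sq_nonneg _
  refine ⟨by linarith, ?_, ?_⟩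
  · -- equality implies Gaussian
    intro hJ1
    have hz : ∫ x, g x ^ 2 = 0 := by rw [hgint, hJ1]; ring
    have hae : (fun x => g x ^ 2) =ᵐ[volume] 0 :=
      (integral_eq_zero_iff_of_nonneg (fun x => sq_nonneg _) hgsqint).mp hz
    have hgc : Continuous g :=
      (hdc.div (Real.continuous_sqrt.comp hpc) hs0).add
        (continuous_id.mul (Real.continuous_sqrt.comp hpc))
    have hg0 : ∀ x, g x = 0 := by
      have heq : (fun x => g x ^ 2) = (fun _ => (0:ℝ)) :=
        (Continuous.ae_eq_iff_eq volume (hgc.pow 2) continuous_const).mp hae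
      intro x
      have := congrFun heq x
      exact pow_eq_zero_iff two_ne_zero |>.mp this
    have hode : ∀ x, deriv p x = -(x * p x) := by
      intro x
      have h0 := hs0 x
      have h2 := hs2 x
      have hmul : (deriv p x / Real.sqrt (p x) + x * Real.sqrt (p x))
          * Real.sqrt (p x) = deriv p x + x * p x := by
        rw [add_mul, div_mul_cancel₀ _ h0, mul_assoc, ← pow_two, h2]
      have h := hg0 x
      simp only [hgdef] at h
      rw [h, zero_mul] at hmul
      linarith
    have hD : ∀ x, HasDerivAt (fun y => p y * Real.exp (y^2/2)) 0 x := by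
      intro x
      have := ((hdiff x).hasDerivAt).mul (exp_sq_hasDeriv x)
      exact this.congr_deriv (by rw [hode x]; ring)
    have hcon : ∀ x, p x * Real.exp (x^2/2) = p 0 := by
      intro x
      have hdf : Differentiable ℝ (fun y => p y * Real.exp (y^2/2)) :=
        fun y => (hD y).differentiableAt
      have := is_const_of_deriv_eq_zero hdf (fun y => (hD y).deriv) x 0
      simpa using this
    have hform : ∀ x, p x = p 0 * Real.exp (-x^2/2) := by
      intro x
      have e : Real.exp (-x^2/2) * Real.exp (x^2/2) = 1 := by
        rw [← Real.exp_add, show -x^2/2 + x^2/2 = 0 by ring, Real.exp_zero]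
      calc p x = p x * Real.exp (x^2/2) * Real.exp (-x^2/2) := by
            rw [mul_assoc, mul_comm (Real.exp (x^2/2)), e, mul_one]
        _ = p 0 * Real.exp (-x^2/2) := by rw [hcon x]
    have hp0 : p 0 * Real.sqrt (2*π) = 1 := by
      have e : ∫ x, p x = ∫ x, p 0 * Real.exp (-x^2/2) := by
        congr 1; exact funext hform
      rw [e, integral_const_mul, gauss_int_half] at hp1
      exact hp1
    refine ae_of_all _ fun x => ?_
    rw [hform x, eq_div_iff (Real.sqrt_ne_zero'.mpr (by positivity))]
    calc p 0 * Real.exp (-x^2/2) * Real.sqrt (2*π)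
        = (p 0 * Real.sqrt (2*π)) * Real.exp (-x^2/2) := by ring
      _ = Real.exp (-x^2/2) := by rw [hp0, one_mul]
  · -- Gaussian implies equality
    intro hae
    have hgaussc : Continuous (fun x : ℝ => Real.exp (-x^2/2) / Real.sqrt (2*π)) :=
      (Real.continuous_exp.comp ((continuous_pow 2).neg.div_const 2)).div_const _
    have hpe : p = fun x => Real.exp (-x^2/2) / Real.sqrt (2*π) :=
      (Continuous.ae_eq_iff_eq volume hpc hgaussc).mp hae
    have hders : ∀ x, deriv p x = -x * p x := by
      intro x
      have h2 : HasDerivAt p (-x * p x) x := by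
        rw [hpe]
        have := (exp_neg_sq_hasDeriv x).div_const (Real.sqrt (2*π))
        exact this.congr_deriv (by beta_reduce; ring)
      exact h2.deriv
    have e : (fun x => (deriv p x) ^ 2 / p x) = fun x => x ^ 2 * p x := by
      funext x
      rw [hders x]
      have h0 := (hpos x).ne'
      field_simp
    rw [e, hvar]
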